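/- Fix a prime p and an abelian group A. Let μ be a p-invariant A-valued distribution on X. Then for every ℤ_p-lattice Λ in ℚ_p², with Λ' := Λ \ p·Λ its set of primitive vectors, one has μ(Λ') = μ(X₀). -/

import Mathlib

/-- `X := (ℚ_p × ℚ_p) \ {(0,0)}`. -/
def X (p : ℕ) [Fact p.Prime] : Set (ℚ_[p] × ℚ_[p]) := {v | v ≠ 0}

/-- The set `X₀` of primitive vectors of `ℤ_p²`. -/
def X0 (p : ℕ) [Fact p.Prime] : Set (ℚ_[p] × ℚ_[p]) :=
  {v | ‖v.1‖ ≤ 1 ∧ ‖v.2‖ ≤ 1 ∧ (‖v.1‖ = 1 ∨ ‖v.2‖ = 1)}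

/-- `p^j·U := {(p^j x, p^j y) : (x, y) ∈ U}`. -/
def pScale (p : ℕ) [Fact p.Prime] (j : ℤ) (U : Set (ℚ_[p] × ℚ_[p])) : Set (ℚ_[p] × ℚ_[p]) :=
  (fun v => ((p : ℚ_[p]) ^ j * v.1, (p : ℚ_[p]) ^ j * v.2)) '' U

/-- A compact open subset of `X`: compact and open in `ℚ_p × ℚ_p` and contained in `X`. -/
def IsCompactOpen (p : ℕ) [Fact p.Prime] (U : Set (ℚ_[p] × ℚ_[p])) : Prop :=
  IsCompact U ∧ IsOpen U ∧ U ⊆ X p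

/-- An `A`-valued distribution on `X`: additive on disjoint compact open subsets of `X`. -/
def IsDistribution (p : ℕ) [Fact p.Prime] {A : Type*} [AddCommGroup A]
    (μ : Set (ℚ_[p] × ℚ_[p]) → A) : Prop :=
  ∀ U V, IsCompactOpen p U → IsCompactOpen p V → Disjoint U V → μ (U ∪ V) = μ U + μ V

/-- `μ` is `p`-invariant: `μ(p·U) = μ(U)` for every compact open `U ⊆ X`. -/
def IsPInvariant (p : ℕ) [Fact p.Prime] {A : Type*} [AddCommGroup A]
    (μ : Set (ℚ_[p] × ℚ_[p]) → A) : Prop :=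
  ∀ U, IsCompactOpen p U → μ (pScale p 1 U) = μ U

/-- A `ℤ_p`-lattice in `ℚ_p²`. -/
def IsLattice (p : ℕ) [Fact p.Prime] (Λ : Set (ℚ_[p] × ℚ_[p])) : Prop :=
  ∃ b : Module.Basis (Fin 2) ℚ_[p] (ℚ_[p] × ℚ_[p]),
    Λ = {z | ∃ a c : ℚ_[p], ‖a‖ ≤ 1 ∧ ‖c‖ ≤ 1 ∧ z = a • b 0 + c • b 1}

section Aux
open Set
variable {p : ℕ} [Fact p.Prime]

lemma pcast_ne_zero : ((p : ℚ_[p]) : ℚ_[p]) ≠ 0 :=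
  Nat.cast_ne_zero.2 (Fact.out : p.Prime).ne_zero

/-- the scaling map -/
noncomputable def sc (p : ℕ) [Fact p.Prime] (j : ℤ) (v : ℚ_[p] × ℚ_[p]) : ℚ_[p] × ℚ_[p] :=
  ((p : ℚ_[p]) ^ j * v.1, (p : ℚ_[p]) ^ j * v.2)

lemma sc_sc (j k : ℤ) (v : ℚ_[p] × ℚ_[p]) : sc p j (sc p k v) = sc p (j + k) v := by
  simp only [sc, Prod.mk.injEq, ← mul_assoc, ← zpow_add₀ (pcast_ne_zero (p := p))]

lemma sc_zero (v : ℚ_[p] × ℚ_[p]) : sc p 0 v = v := by simp [sc]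

lemma continuous_sc (j : ℤ) : Continuous (sc p j) := by
  unfold sc; fun_prop

lemma pScale_eq_preimage (j : ℤ) (U : Set (ℚ_[p] × ℚ_[p])) :
    pScale p j U = sc p (-j) ⁻¹' U := by
  have h1 : Function.LeftInverse (sc p (-j)) (sc p j) := fun v => by rw [sc_sc]; simp [sc_zero]
  have h2 : Function.RightInverse (sc p (-j)) (sc p j) := fun v => by rw [sc_sc]; simp [sc_zero]
  exact congrFun (Set.image_eq_preimage_of_inverse h1 h2) U

lemma mem_pScale {j : ℤ} {U : Set (ℚ_[p] × ℚ_[p])} {v : ℚ_[p] × ℚ_[p]} :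
    v ∈ pScale p j U ↔ sc p (-j) v ∈ U := by
  rw [pScale_eq_preimage]; rfl

lemma pScale_pScale (j k : ℤ) (U : Set (ℚ_[p] × ℚ_[p])) :
    pScale p j (pScale p k U) = pScale p (j + k) U := by
  simp only [pScale_eq_preimage]
  ext v
  simp only [mem_preimage, sc_sc]
  rw [neg_add, add_comm (-k) (-j)]

lemma pScale_zero (U : Set (ℚ_[p] × ℚ_[p])) : pScale p 0 U = U := by
  rw [pScale_eq_preimage]; ext v; simp [sc_zero]

lemma pScale_inter (j : ℤ) (U V : Set (ℚ_[p] × ℚ_[p])) :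
    pScale p j (U ∩ V) = pScale p j U ∩ pScale p j V := by
  simp [pScale_eq_preimage, Set.preimage_inter]

lemma sc_ne_zero {j : ℤ} {v : ℚ_[p] × ℚ_[p]} (hv : v ≠ 0) : sc p j v ≠ 0 := by
  have hp := zpow_ne_zero j (pcast_ne_zero (p := p))
  simp only [sc, ne_eq, Prod.ext_iff, Prod.fst_zero, Prod.snd_zero, mul_eq_zero,
    not_and_or, not_or] at *
  tauto

lemma isCompactOpen_pScale {j : ℤ} {U : Set (ℚ_[p] × ℚ_[p])} (hU : IsCompactOpen p U) :
    IsCompactOpen p (pScale p j U) := by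
  obtain ⟨hc, ho, hx⟩ := hU
  refine ⟨?_, ?_, ?_⟩
  · exact hc.image (continuous_sc j)
  · rw [pScale_eq_preimage]; exact ho.preimage (continuous_sc (-j))
  · rintro v ⟨w, hw, rfl⟩
    exact sc_ne_zero (hx hw)


lemma preal_pos : (0:ℝ) < (p:ℝ) := by
  exact_mod_cast (Fact.out : p.Prime).pos

lemma preal_ne_one : (p:ℝ) ≠ 1 := by
  exact_mod_cast (Fact.out : p.Prime).one_lt.ne'

lemma X0_eq : X0 p = {v : ℚ_[p] × ℚ_[p] | max ‖v.1‖ ‖v.2‖ = 1} := by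
  ext v
  simp only [X0, mem_setOf_eq]
  constructor
  · rintro ⟨h1, h2, h3 | h3⟩
    · exact le_antisymm (max_le h1 h2) (h3 ▸ le_max_left _ _)
    · exact le_antisymm (max_le h1 h2) (h3 ▸ le_max_right _ _)
  · intro h
    rcases max_cases ‖v.1‖ ‖v.2‖ with ⟨he, hle⟩ | ⟨he, hle⟩ <;> rw [he] at h
    · exact ⟨le_of_eq h, h ▸ hle, Or.inl h⟩
    · exact ⟨h ▸ hle.le, le_of_eq h, Or.inr h⟩

lemma isOpen_norm_le_one : IsOpen {x : ℚ_[p] | ‖x‖ ≤ 1} := by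
  have : {x : ℚ_[p] | ‖x‖ ≤ 1} = Metric.ball 0 (p:ℝ) := by
    ext x
    simp only [mem_setOf_eq, Metric.mem_ball, dist_zero_right]
    have := Padic.norm_le_pow_iff_norm_lt_pow_add_one x 0
    simpa using this
  rw [this]; exact Metric.isOpen_ball

lemma isClosed_norm_le_one : IsClosed {x : ℚ_[p] | ‖x‖ ≤ 1} := by
  have : {x : ℚ_[p] | ‖x‖ ≤ 1} = Metric.closedBall 0 1 := by
    ext x; simp [Metric.mem_closedBall, dist_zero_right]
  rw [this]; exact Metric.isClosed_closedBall

lemma isOpen_norm_eq_one : IsOpen {x : ℚ_[p] | ‖x‖ = 1} := by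
  have h : {x : ℚ_[p] | ‖x‖ = 1} = {x : ℚ_[p] | ‖x‖ ≤ 1} ∩ (Metric.closedBall 0 ((p:ℝ)^(-1:ℤ)))ᶜ := by
    ext x
    simp only [mem_setOf_eq, mem_inter_iff, mem_compl_iff, Metric.mem_closedBall,
      dist_zero_right, not_le]
    constructor
    · intro h
      refine ⟨h.le, by rw [h]; exact zpow_lt_one_of_neg₀ (by exact_mod_cast (Fact.out : p.Prime).one_lt) (by norm_num)⟩
    · rintro ⟨h1, h2⟩
      by_contra hne
      have hlt : ‖x‖ < 1 := lt_of_le_of_ne h1 hne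
      have : ‖x‖ ≤ (p:ℝ)^(-1:ℤ) := by
        have := (Padic.norm_le_pow_iff_norm_lt_pow_add_one x (-1)).2 (by simpa using hlt)
        exact this
      exact absurd this (not_le.2 h2)
  rw [h]
  exact isOpen_norm_le_one.inter (Metric.isClosed_closedBall).isOpen_compl

lemma isClosed_norm_eq_one : IsClosed {x : ℚ_[p] | ‖x‖ = 1} :=
  isClosed_eq (by fun_prop) continuous_const

lemma isOpen_X0 : IsOpen (X0 p) := by
  have : X0 p = (((fun v : ℚ_[p] × ℚ_[p] => v.1) ⁻¹' {x | ‖x‖ ≤ 1}) ∩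
      ((fun v : ℚ_[p] × ℚ_[p] => v.2) ⁻¹' {x | ‖x‖ ≤ 1})) ∩
      (((fun v : ℚ_[p] × ℚ_[p] => v.1) ⁻¹' {x | ‖x‖ = 1}) ∪
      ((fun v : ℚ_[p] × ℚ_[p] => v.2) ⁻¹' {x | ‖x‖ = 1})) := by
    ext v; simp only [X0, mem_setOf_eq, mem_inter_iff, mem_preimage, mem_union]; tauto
  rw [this]
  exact (((isOpen_norm_le_one.preimage continuous_fst).inter
    (isOpen_norm_le_one.preimage continuous_snd))).inter
    ((isOpen_norm_eq_one.preimage continuous_fst).union (isOpen_norm_eq_one.preimage continuous_snd))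

lemma isCompact_X0 : IsCompact (X0 p) := by
  have hsub : X0 p ⊆ Metric.closedBall (0 : ℚ_[p] × ℚ_[p]) 1 := by
    rintro v ⟨h1, h2, _⟩
    rw [Metric.mem_closedBall, Prod.dist_eq]
    simp only [Prod.fst_zero, Prod.snd_zero, dist_zero_right]
    exact max_le h1 h2
  have hclosed : IsClosed (X0 p) := by
    have : X0 p = (((fun v : ℚ_[p] × ℚ_[p] => v.1) ⁻¹' {x | ‖x‖ ≤ 1}) ∩
        ((fun v : ℚ_[p] × ℚ_[p] => v.2) ⁻¹' {x | ‖x‖ ≤ 1})) ∩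
        (((fun v : ℚ_[p] × ℚ_[p] => v.1) ⁻¹' {x | ‖x‖ = 1}) ∪
        ((fun v : ℚ_[p] × ℚ_[p] => v.2) ⁻¹' {x | ‖x‖ = 1})) := by
      ext v; simp only [X0, mem_setOf_eq, mem_inter_iff, mem_preimage, mem_union]; tauto
    rw [this]
    exact (((isClosed_norm_le_one.preimage continuous_fst).inter
      (isClosed_norm_le_one.preimage continuous_snd))).inter
      ((isClosed_norm_eq_one.preimage continuous_fst).union
        (isClosed_norm_eq_one.preimage continuous_snd))
  exact (isCompact_closedBall _ _).of_isClosed_subset hclosed hsub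

lemma X0_subset : ∀ v ∈ X0 p, v ≠ (0 : ℚ_[p] × ℚ_[p]) := by
  intro v hv h0
  rw [X0_eq] at hv
  simp only [mem_setOf_eq, h0] at hv
  norm_num at hv


lemma max_norm_sc (j : ℤ) (v : ℚ_[p] × ℚ_[p]) :
    max ‖(sc p j v).1‖ ‖(sc p j v).2‖ = (p:ℝ)^(-j) * max ‖v.1‖ ‖v.2‖ := by
  have hn : ‖((p:ℚ_[p])^j)‖ = (p:ℝ)^(-j) := Padic.norm_p_zpow j
  have h0 : (0:ℝ) ≤ (p:ℝ)^(-j) := le_of_lt (zpow_pos (by exact_mod_cast (Fact.out : p.Prime).pos) _)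
  simp only [sc, norm_mul, hn]
  exact (mul_max_of_nonneg _ _ h0).symm

lemma exists_scale (v : ℚ_[p] × ℚ_[p]) (hv : v ≠ 0) :
    ∃ j : ℤ, max ‖v.1‖ ‖v.2‖ = (p:ℝ)^(-j) := by
  rcases max_cases ‖v.1‖ ‖v.2‖ with ⟨he, hle⟩ | ⟨he, hle⟩
  · have h1 : v.1 ≠ 0 := by
      intro h
      apply hv
      have : ‖v.2‖ ≤ 0 := by simpa [h] using hle
      have h2 : v.2 = 0 := norm_eq_zero.1 (le_antisymm this (norm_nonneg _))
      exact Prod.ext h h2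
    exact ⟨v.1.valuation, by rw [he, Padic.norm_eq_zpow_neg_valuation h1]⟩
  · have h2 : v.2 ≠ 0 := by
      intro h
      apply hv
      have : ‖v.1‖ < 0 := by simpa [h] using hle
      exact absurd this (not_lt.2 (norm_nonneg _))
    exact ⟨v.2.valuation, by rw [he, Padic.norm_eq_zpow_neg_valuation h2]⟩

lemma zpow_neg_inj {j k : ℤ} (h : (p:ℝ)^(-j) = (p:ℝ)^(-k)) : j = k := by
  have hp : (0:ℝ) < (p:ℝ) := by exact_mod_cast (Fact.out : p.Prime).pos
  have h1 : (p:ℝ) ≠ 1 := by exact_mod_cast (Fact.out : p.Prime).one_lt.ne'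
  have := zpow_right_injective₀ hp h1 h
  omega

lemma pReal_ne_zero : ((p:ℝ)) ≠ 0 := by
  exact_mod_cast (Fact.out : p.Prime).ne_zero

lemma pScale_X0 (j : ℤ) :
    pScale p j (X0 p) = {v : ℚ_[p] × ℚ_[p] | max ‖v.1‖ ‖v.2‖ = (p:ℝ)^(-j)} := by
  ext v
  rw [mem_pScale, X0_eq]
  simp only [mem_setOf_eq, max_norm_sc, neg_neg]
  constructor
  · intro h
    have h2 := congrArg (fun x => ((p:ℝ))^(-j) * x) h
    simp only [← mul_assoc, ← zpow_add₀ (pReal_ne_zero (p := p)), neg_add_cancel,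
      zpow_zero, one_mul, mul_one] at h2
    exact h2
  · intro h
    rw [h, ← zpow_add₀ (pReal_ne_zero (p := p)), add_neg_cancel, zpow_zero]

lemma pScale_X0_disjoint {j k : ℤ} (h : j ≠ k) :
    Disjoint (pScale p j (X0 p)) (pScale p k (X0 p)) := by
  rw [Set.disjoint_left]
  intro v hj hk
  rw [pScale_X0] at hj hk
  exact h (zpow_neg_inj (hj.symm.trans hk))

lemma mem_pScale_X0 {v : ℚ_[p] × ℚ_[p]} (hv : v ≠ 0) : ∃ j, v ∈ pScale p j (X0 p) := by
  obtain ⟨j, hj⟩ := exists_scale v hv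
  exact ⟨j, by rw [pScale_X0]; exact hj⟩

lemma isCompactOpen_X0 : IsCompactOpen p (X0 p) :=
  ⟨isCompact_X0, isOpen_X0, fun v hv => X0_subset v hv⟩

variable {A : Type*} [AddCommGroup A]

lemma mu_empty {μ : Set (ℚ_[p] × ℚ_[p]) → A} (hμ : IsDistribution p μ) : μ ∅ = 0 := by
  have h := hμ ∅ ∅ ⟨isCompact_empty, isOpen_empty, empty_subset _⟩
    ⟨isCompact_empty, isOpen_empty, empty_subset _⟩ (by simp)
  simp only [Set.union_self] at h
  exact left_eq_add.1 h

lemma isCompactOpen_biUnion {s : Finset ℤ} {U : ℤ → Set (ℚ_[p] × ℚ_[p])}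
    (hco : ∀ j, IsCompactOpen p (U j)) : IsCompactOpen p (⋃ j ∈ s, U j) := by
  refine ⟨s.finite_toSet.isCompact_biUnion (fun j _ => (hco j).1),
    isOpen_biUnion (fun j _ => (hco j).2.1), iUnion₂_subset (fun j _ => (hco j).2.2)⟩

lemma mu_finset_sum {μ : Set (ℚ_[p] × ℚ_[p]) → A} (hμ : IsDistribution p μ)
    (s : Finset ℤ) (U : ℤ → Set (ℚ_[p] × ℚ_[p]))
    (hco : ∀ j, IsCompactOpen p (U j))
    (hdisj : ∀ j k, j ≠ k → Disjoint (U j) (U k)) :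
    μ (⋃ j ∈ s, U j) = ∑ j ∈ s, μ (U j) := by
  classical
  induction s using Finset.induction_on with
  | empty => simpa using mu_empty hμ
  | @insert a s ha ih =>
    rw [Finset.set_biUnion_insert, Finset.sum_insert ha,
      hμ _ _ (hco a) (isCompactOpen_biUnion hco)
        (Set.disjoint_iUnion₂_right.2 (fun j hj => hdisj a j (fun h => ha (h ▸ hj)))), ih]

lemma mu_pScale {μ : Set (ℚ_[p] × ℚ_[p]) → A} (hinv : IsPInvariant p μ) (j : ℤ)
    {U : Set (ℚ_[p] × ℚ_[p])} (hU : IsCompactOpen p U) : μ (pScale p j U) = μ U := by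
  induction j using Int.induction_on with
  | zero => rw [pScale_zero]
  | succ k ih =>
    rw [show ((k:ℤ)+1) = 1 + k by ring, ← pScale_pScale, hinv _ (isCompactOpen_pScale hU)]
    exact ih
  | pred k ih =>
    have h1 := hinv (pScale p (-((k:ℤ))-1) U) (isCompactOpen_pScale hU)
    rw [pScale_pScale, show (1 : ℤ) + (-((k:ℤ))-1) = -k by ring] at h1
    rw [← h1]
    exact ih

lemma isCompactOpen_inter {U V : Set (ℚ_[p] × ℚ_[p])} (hU : IsCompactOpen p U)
    (hV : IsCompactOpen p V) : IsCompactOpen p (U ∩ V) :=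
  ⟨hU.1.inter_right hV.1.isClosed, hU.2.1.inter hV.2.1, fun _ hv => hU.2.2 hv.1⟩

lemma key {μ : Set (ℚ_[p] × ℚ_[p]) → A} (hμ : IsDistribution p μ)
    {S T : Set (ℚ_[p] × ℚ_[p])} (hS : IsCompactOpen p S) (hT : IsCompactOpen p T)
    (hScov : ∀ v : ℚ_[p] × ℚ_[p], v ≠ 0 → ∃ j, v ∈ pScale p j S)
    (hSdisj : ∀ j k : ℤ, j ≠ k → Disjoint (pScale p j S) (pScale p k S)) :
    μ T = ∑ᶠ j : ℤ, μ (pScale p j S ∩ T) := by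
  classical
  have hco : ∀ j : ℤ, IsCompactOpen p (pScale p j S ∩ T) :=
    fun j => isCompactOpen_inter (isCompactOpen_pScale hS) hT
  have hcover : T ⊆ ⋃ j : ℤ, pScale p j S := by
    intro v hv
    obtain ⟨j, hj⟩ := hScov v (hT.2.2 hv)
    exact mem_iUnion.2 ⟨j, hj⟩
  obtain ⟨t, ht⟩ := hT.1.elim_finite_subcover (fun j : ℤ => pScale p j S)
    (fun j => (isCompactOpen_pScale hS).2.1) hcover
  have hE : {j : ℤ | (pScale p j S ∩ T).Nonempty}.Finite := by
    apply t.finite_toSet.subset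
    rintro j ⟨v, hvS, hvT⟩
    obtain ⟨k, hkt, hk⟩ := mem_iUnion₂.1 (ht hvT)
    rcases eq_or_ne j k with rfl | hne
    · exact hkt
    · exact absurd (Set.disjoint_left.1 (hSdisj j k hne) hvS) (not_not.2 hk)
  have hsub : Function.support (fun j : ℤ => μ (pScale p j S ∩ T)) ⊆ ↑hE.toFinset := by
    intro j hj
    rw [Set.Finite.coe_toFinset]
    by_contra hnj
    simp only [mem_setOf_eq, Set.not_nonempty_iff_eq_empty] at hnj
    exact hj (by simp only []; rw [hnj, mu_empty hμ])
  rw [finsum_eq_sum_of_support_subset _ hsub]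
  have hTeq : T = ⋃ j ∈ hE.toFinset, (pScale p j S ∩ T) := by
    apply Set.Subset.antisymm
    · intro v hv
      obtain ⟨j, hj⟩ := hScov v (hT.2.2 hv)
      refine mem_iUnion₂.2 ⟨j, ?_, hj, hv⟩
      rw [Set.Finite.mem_toFinset]
      exact ⟨v, hj, hv⟩
    · exact iUnion₂_subset (fun j _ => inter_subset_right)
  calc μ T = μ (⋃ j ∈ hE.toFinset, (pScale p j S ∩ T)) := by rw [← hTeq]
    _ = ∑ j ∈ hE.toFinset, μ (pScale p j S ∩ T) :=
        mu_finset_sum hμ _ _ hco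
          (fun j k hne => (hSdisj j k hne).mono inf_le_left inf_le_left)

lemma linearEquiv_sc (e : (ℚ_[p] × ℚ_[p]) ≃ₗ[ℚ_[p]] (ℚ_[p] × ℚ_[p])) (j : ℤ) (v : ℚ_[p] × ℚ_[p]) :
    e (sc p j v) = sc p j (e v) := by
  have h : ∀ w : ℚ_[p] × ℚ_[p], sc p j w = ((p:ℚ_[p])^j) • w := fun w => by
    apply Prod.ext <;> simp [sc]
  rw [h, h, map_smul]

lemma pScale_preimage (e : (ℚ_[p] × ℚ_[p]) ≃ₗ[ℚ_[p]] (ℚ_[p] × ℚ_[p])) (j : ℤ)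
    (U : Set (ℚ_[p] × ℚ_[p])) :
    pScale p j (⇑e ⁻¹' U) = ⇑e ⁻¹' (pScale p j U) := by
  simp only [pScale_eq_preimage]
  ext v
  simp only [mem_preimage, linearEquiv_sc]

end Aux

open Set in
/-- For a `p`-invariant `A`-valued distribution `μ` on `X` and any `ℤ_p`-lattice `Λ`
with set of primitive vectors `Λ' = Λ \ pΛ`, one has `μ(Λ') = μ(X₀)`. -/
theorem stmt2 (p : ℕ) [Fact p.Prime] {A : Type*} [AddCommGroup A]
    (μ : Set (ℚ_[p] × ℚ_[p]) → A) (hμ : IsDistribution p μ) (hinv : IsPInvariant p μ)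
    (Λ : Set (ℚ_[p] × ℚ_[p])) (hΛ : IsLattice p Λ) :
    μ (Λ \ pScale p 1 Λ) = μ (X0 p) := by
  obtain ⟨b, hb⟩ := hΛ
  set e := b.equivFun.trans (LinearEquiv.finTwoArrow ℚ_[p] ℚ_[p]) with he
  have he_apply : ∀ z, e z = (b.repr z 0, b.repr z 1) := fun z => rfl
  set B : Set (ℚ_[p] × ℚ_[p]) := {v | ‖v.1‖ ≤ 1 ∧ ‖v.2‖ ≤ 1} with hB
  have hp0 : (0:ℝ) < (p:ℝ) := by exact_mod_cast (Fact.out : p.Prime).pos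
  have hΛeq : Λ = ⇑e ⁻¹' B := by
    rw [hb]
    ext z
    simp only [mem_setOf_eq, mem_preimage, he_apply, hB]
    constructor
    · rintro ⟨a, c, h1, h2, rfl⟩
      have ha : b.repr (a • b 0 + c • b 1) 0 = a := by
        simp [Module.Basis.repr_self, Finsupp.single_apply]
      have hc : b.repr (a • b 0 + c • b 1) 1 = c := by
        simp [Module.Basis.repr_self, Finsupp.single_apply]
      rw [ha, hc]
      exact ⟨h1, h2⟩
    · rintro ⟨h1, h2⟩
      refine ⟨b.repr z 0, b.repr z 1, h1, h2, ?_⟩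
      have := b.sum_repr z
      rw [Fin.sum_univ_two] at this
      exact this.symm
  have hiff : ∀ x : ℚ_[p], ((p:ℝ) * ‖x‖ ≤ 1) ↔ ‖x‖ ≤ (p:ℝ)^(-1:ℤ) := by
    intro x
    rw [zpow_neg_one, ← one_div, le_div_iff₀ hp0, mul_comm]
  have hmem_pB : ∀ v : ℚ_[p] × ℚ_[p],
      v ∈ pScale p 1 B ↔ (‖v.1‖ ≤ (p:ℝ)^(-1:ℤ) ∧ ‖v.2‖ ≤ (p:ℝ)^(-1:ℤ)) := by
    intro v
    rw [mem_pScale]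
    show ‖(sc p (-1) v).1‖ ≤ 1 ∧ ‖(sc p (-1) v).2‖ ≤ 1 ↔ _
    simp only [sc, norm_mul, Padic.norm_p_zpow, neg_neg, zpow_one]
    rw [hiff, hiff]
  have hone : ∀ x : ℚ_[p], ‖x‖ ≤ 1 → ¬(‖x‖ ≤ (p:ℝ)^(-1:ℤ)) → ‖x‖ = 1 := by
    intro x h1 h2
    by_contra hne
    exact h2 ((Padic.norm_le_pow_iff_norm_lt_pow_add_one x (-1)).2
      (by rw [show (-1:ℤ)+1 = 0 by ring, zpow_zero]; exact lt_of_le_of_ne h1 hne))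
  have hlt1 : ((p:ℝ))^(-1:ℤ) < 1 :=
    zpow_lt_one_of_neg₀ (by exact_mod_cast (Fact.out : p.Prime).one_lt) (by norm_num)
  have hBdiff : B \ pScale p 1 B = X0 p := by
    ext v
    simp only [mem_diff, hmem_pB]; simp only [hB, mem_setOf_eq, not_and_or]
    constructor
    · rintro ⟨⟨h1, h2⟩, h3 | h3⟩
      · exact ⟨h1, h2, Or.inl (hone _ h1 h3)⟩
      · exact ⟨h1, h2, Or.inr (hone _ h2 h3)⟩
    · rintro ⟨h1, h2, h3 | h3⟩
      · exact ⟨⟨h1, h2⟩, Or.inl (fun h => absurd (h3 ▸ h) (not_le.2 hlt1))⟩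
      · exact ⟨⟨h1, h2⟩, Or.inr (fun h => absurd (h3 ▸ h) (not_le.2 hlt1))⟩
  have hSeq : Λ \ pScale p 1 Λ = ⇑e ⁻¹' (X0 p) := by
    rw [hΛeq, pScale_preimage, ← Set.preimage_diff, hBdiff]
  have hScov : ∀ v : ℚ_[p] × ℚ_[p], v ≠ 0 → ∃ j, v ∈ pScale p j (⇑e ⁻¹' X0 p) := by
    intro v hv
    obtain ⟨j, hj⟩ := mem_pScale_X0 (show e v ≠ 0 by simp [hv])
    exact ⟨j, by rw [pScale_preimage]; exact hj⟩
  have hSdisj : ∀ j k : ℤ, j ≠ k →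
      Disjoint (pScale p j (⇑e ⁻¹' X0 p)) (pScale p k (⇑e ⁻¹' X0 p)) := by
    intro j k hne
    rw [pScale_preimage, pScale_preimage]
    exact (pScale_X0_disjoint hne).preimage _
  have hSco : IsCompactOpen p (⇑e ⁻¹' X0 p) := by
    refine ⟨?_, isOpen_X0.preimage e.toLinearMap.continuous_of_finiteDimensional, ?_⟩
    · have himg : ⇑e ⁻¹' X0 p = ⇑e.symm '' X0 p :=
        ((Equiv.image_symm_eq_preimage e.toEquiv (X0 p)).symm : _)
      rw [himg]
      exact isCompact_X0.image e.symm.toLinearMap.continuous_of_finiteDimensional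
    · intro v hv
      show v ≠ 0
      intro h0
      exact X0_subset (e v) hv (by rw [h0, map_zero])
  rw [hSeq]
  have h1 : μ (⇑e ⁻¹' X0 p) = ∑ᶠ j : ℤ, μ (pScale p j (X0 p) ∩ ⇑e ⁻¹' X0 p) :=
    key hμ isCompactOpen_X0 hSco (fun v hv => mem_pScale_X0 hv)
      (fun j k h => pScale_X0_disjoint h)
  have h2 : μ (X0 p) = ∑ᶠ j : ℤ, μ (pScale p j (⇑e ⁻¹' X0 p) ∩ X0 p) :=
    key hμ hSco isCompactOpen_X0 hScov hSdisj
  rw [h1, h2]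
  have h3 : ∀ j : ℤ, μ (pScale p (-j) (⇑e ⁻¹' X0 p) ∩ X0 p)
      = μ (pScale p j (X0 p) ∩ ⇑e ⁻¹' X0 p) := by
    intro j
    have hco : IsCompactOpen p (pScale p (-j) (⇑e ⁻¹' X0 p) ∩ X0 p) :=
      isCompactOpen_inter (isCompactOpen_pScale hSco) isCompactOpen_X0
    have h := mu_pScale hinv j hco
    rw [pScale_inter, pScale_pScale, add_neg_cancel, pScale_zero, inter_comm] at h
    exact h.symm
  calc ∑ᶠ j : ℤ, μ (pScale p j (X0 p) ∩ ⇑e ⁻¹' X0 p)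
      = ∑ᶠ j : ℤ, μ (pScale p (-j) (⇑e ⁻¹' X0 p) ∩ X0 p) := finsum_congr (fun j => (h3 j).symm)
    _ = ∑ᶠ j : ℤ, μ (pScale p j (⇑e ⁻¹' X0 p) ∩ X0 p) :=
        finsum_comp (g := fun j : ℤ => μ (pScale p j (⇑e ⁻¹' X0 p) ∩ X0 p))
          (fun j : ℤ => -j) neg_involutive.bijective
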